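/- A thin irreducible component for the Whitney umbrella: Let k be an algebraically closed field of characteristic zero and let f = x·y² − z² ∈ MvPolynomial (Fin 3) k, with the three variables denoted x, y, z. Let A be the arc-fiber algebra at the origin, i.e. the quotient of the arc algebra A∞((f)) by the ideal generated by the images of x^{(0)}, y^{(0)}, z^{(0)}. Then the ideal of A generated by the images of all the variables y^{(i)} and z^{(i)} (for all i ∈ ℕ) is a minimal prime of A. (Equivalently: the set of arcs lying in the singular axis y = z = 0 and passing through the origin is an irreducible component of the set of arcs on the Whitney umbrella through the origin.) -/

import Mathlib

open MvPolynomial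

/-- The universal arc `e : k[x_1,…,x_n] → (k[x_j^{(i)}])[[t]]`, sending
`x_j` to `Σ_{i ≥ 0} x_j^{(i)} t^i`. -/
noncomputable def univArc (k : Type*) [CommRing k] (n : ℕ) :
    MvPolynomial (Fin n) k →ₐ[k] PowerSeries (MvPolynomial (Fin n × ℕ) k) :=
  MvPolynomial.aeval fun j => PowerSeries.mk fun i => MvPolynomial.X (j, i)

/-- The ideal of the arc space of `V(I)`: generated by all `t`-coefficients of `e f`, `f ∈ I`. -/
noncomputable def arcIdeal {k : Type*} [CommRing k] {n : ℕ}
    (I : Ideal (MvPolynomial (Fin n) k)) : Ideal (MvPolynomial (Fin n × ℕ) k) :=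
  Ideal.span {g | ∃ f ∈ I, ∃ i : ℕ, g = PowerSeries.coeff i (univArc k n f)}

/-- The arc algebra `A∞(I)`. -/
noncomputable abbrev ArcAlgebra {k : Type*} [CommRing k] {n : ℕ}
    (I : Ideal (MvPolynomial (Fin n) k)) : Type _ :=
  MvPolynomial (Fin n × ℕ) k ⧸ arcIdeal I

/-- The map `σ : k[x_1,…,x_n] → k[x_j^{(i)}]` recording the initial point of an arc. -/
noncomputable def initialPoint (k : Type*) [CommRing k] (n : ℕ) :
    MvPolynomial (Fin n) k →ₐ[k] MvPolynomial (Fin n × ℕ) k :=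
  MvPolynomial.aeval fun j => MvPolynomial.X (j, 0)



section WhitneyAux

noncomputable def wProj (k : Type*) [Field k] :
    MvPolynomial (Fin 3 × ℕ) k →ₐ[k] MvPolynomial (Fin 3 × ℕ) k :=
  aeval (fun p : Fin 3 × ℕ => if p.2 = 0 ∨ p.1 = 1 ∨ p.1 = 2 then 0 else X p)

def wT : Set (Fin 3 × ℕ) := {p | p.2 = 0 ∨ p.1 = 1 ∨ p.1 = 2}

lemma wProj_sub_mem {k : Type*} [Field k] (g : MvPolynomial (Fin 3 × ℕ) k) :
    g - wProj k g ∈ Ideal.span (X '' wT : Set (MvPolynomial (Fin 3 × ℕ) k)) := by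
  induction g using MvPolynomial.induction_on with
  | C a => simp [wProj]
  | add p q hp hq =>
      have : p + q - wProj k (p + q) = (p - wProj k p) + (q - wProj k q) := by
        rw [map_add]; ring
      rw [this]; exact Ideal.add_mem _ hp hq
  | mul_X p t hp =>
      rw [map_mul]
      by_cases ht : t.2 = 0 ∨ t.1 = 1 ∨ t.1 = 2
      · have : wProj k (X t) = 0 := by simp [wProj, ht]
        rw [this, mul_zero, sub_zero]
        exact Ideal.mul_mem_left _ _ (Ideal.subset_span ⟨t, ht, rfl⟩)
      · have : wProj k (X t) = X t := by simp [wProj, ht]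
        rw [this]
        have : p * X t - wProj k p * X t = (p - wProj k p) * X t := by ring
        rw [this]
        exact Ideal.mul_mem_right _ _ hp

lemma wSpan_eq_ker {k : Type*} [Field k] :
    Ideal.span (X '' wT : Set (MvPolynomial (Fin 3 × ℕ) k)) =
      RingHom.ker (wProj k).toRingHom := by
  apply le_antisymm
  · rw [Ideal.span_le]
    rintro _ ⟨t, ht, rfl⟩
    have ht' : t.2 = 0 ∨ t.1 = 1 ∨ t.1 = 2 := ht
    simp only [SetLike.mem_coe, RingHom.mem_ker, AlgHom.toRingHom_eq_coe, RingHom.coe_coe]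
    simp [wProj, ht']
  · intro g hg
    have h0 : wProj k g = 0 := hg
    have := wProj_sub_mem g
    rwa [h0, sub_zero] at this

lemma wSpan_isPrime {k : Type*} [Field k] :
    (Ideal.span (X '' wT : Set (MvPolynomial (Fin 3 × ℕ) k))).IsPrime := by
  rw [wSpan_eq_ker]
  exact RingHom.ker_isPrime _

lemma wX01_not_mem {k : Type*} [Field k] :
    X ((0 : Fin 3), 1) ∉ Ideal.span (X '' wT : Set (MvPolynomial (Fin 3 × ℕ) k)) := by
  rw [wSpan_eq_ker]
  intro h
  have h0 : wProj k (X ((0 : Fin 3), 1)) = 0 := h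
  rw [show wProj k (X ((0 : Fin 3), 1)) = X ((0 : Fin 3), 1) by simp [wProj]] at h0
  exact MvPolynomial.X_ne_zero _ h0

lemma wUnivArc_eq {k : Type*} [Field k] (f : MvPolynomial (Fin 3) k)
    (hf : f = X 0 * X 1 ^ 2 - X 2 ^ 2) :
    univArc k 3 f =
      (PowerSeries.mk fun i => (X ((0 : Fin 3), i) : MvPolynomial (Fin 3 × ℕ) k)) *
        ((PowerSeries.mk fun i => (X ((1 : Fin 3), i) : MvPolynomial (Fin 3 × ℕ) k)) *
          (PowerSeries.mk fun i => (X ((1 : Fin 3), i) : MvPolynomial (Fin 3 × ℕ) k))) -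
      (PowerSeries.mk fun i => (X ((2 : Fin 3), i) : MvPolynomial (Fin 3 × ℕ) k)) *
        (PowerSeries.mk fun i => (X ((2 : Fin 3), i) : MvPolynomial (Fin 3 × ℕ) k)) := by
  rw [hf]
  simp only [univArc, map_sub, map_mul, map_pow, aeval_X, pow_two]

lemma wCoeff_mem {k : Type*} [Field k] (f : MvPolynomial (Fin 3) k)
    (hf : f = X 0 * X 1 ^ 2 - X 2 ^ 2) (m : ℕ) :
    PowerSeries.coeff m (univArc k 3 f) ∈
      Ideal.span (X '' {p : Fin 3 × ℕ | p.1 = 1 ∨ p.1 = 2} :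
        Set (MvPolynomial (Fin 3 × ℕ) k)) := by
  rw [wUnivArc_eq f hf, map_sub, PowerSeries.coeff_mul, PowerSeries.coeff_mul]
  refine sub_mem (Ideal.sum_mem _ fun p hp => ?_) (Ideal.sum_mem _ fun p hp => ?_)
  · rw [PowerSeries.coeff_mul]
    refine Ideal.mul_mem_left _ _ (Ideal.sum_mem _ fun q hq => ?_)
    simp only [PowerSeries.coeff_mk]
    exact Ideal.mul_mem_right _ _ (Ideal.subset_span ⟨((1 : Fin 3), q.1), Or.inl rfl, rfl⟩)
  · simp only [PowerSeries.coeff_mk]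
    exact Ideal.mul_mem_right _ _ (Ideal.subset_span ⟨((2 : Fin 3), p.1), Or.inr rfl, rfl⟩)

lemma wArcIdeal_le {k : Type*} [Field k] (f : MvPolynomial (Fin 3) k)
    (hf : f = X 0 * X 1 ^ 2 - X 2 ^ 2) :
    arcIdeal (Ideal.span {f}) ≤
      Ideal.span (X '' {p : Fin 3 × ℕ | p.1 = 1 ∨ p.1 = 2} :
        Set (MvPolynomial (Fin 3 × ℕ) k)) := by
  rw [arcIdeal, Ideal.span_le]
  rintro _ ⟨g, hg, m, rfl⟩
  rw [Ideal.mem_span_singleton] at hg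
  obtain ⟨q, rfl⟩ := hg
  rw [map_mul, PowerSeries.coeff_mul]
  exact SetLike.mem_coe.mpr <| Ideal.sum_mem _ fun p hp =>
    Ideal.mul_mem_right _ _ (wCoeff_mem f hf p.1)


/-- Abstract nilpotency induction for the Whitney umbrella arc relations. -/
lemma wNilAux {B : Type*} [CommRing B] (u : Fin 3 → ℕ → B)
    (hu0 : ∀ j : Fin 3, u j 0 = 0)
    (hunit : IsUnit (u 0 1))
    (hrel : ∀ m : ℕ,
      (∑ p ∈ Finset.HasAntidiagonal.antidiagonal m, u 0 p.1 *
        ∑ q ∈ Finset.HasAntidiagonal.antidiagonal p.2, u 1 q.1 * u 1 q.2) =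
      ∑ p ∈ Finset.HasAntidiagonal.antidiagonal m, u 2 p.1 * u 2 p.2) :
    ∀ i : ℕ, u 1 i ∈ nilradical B ∧ u 2 i ∈ nilradical B := by
  intro i
  induction i using Nat.strong_induction_on with
  | _ i IH =>
    match i with
    | 0 => rw [hu0, hu0]; exact ⟨zero_mem _, zero_mem _⟩
    | (n + 1) =>
      have hW : ∀ d : ℕ, d ≤ 2 * n + 1 →
          (∑ q ∈ Finset.HasAntidiagonal.antidiagonal d, u 1 q.1 * u 1 q.2) ∈ nilradical B := by
        intro d hd
        refine Ideal.sum_mem _ fun q hq => ?_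
        have hq' := Finset.HasAntidiagonal.mem_antidiagonal.mp hq
        rcases le_or_gt q.1 n with h | h
        · exact Ideal.mul_mem_right _ _ (IH q.1 (by omega)).1
        · exact Ideal.mul_mem_left _ _ (IH q.2 (by omega)).1
      -- z-step at level 2n+2
      have hz : u 2 (n + 1) ∈ nilradical B := by
        have h1 := hrel (2 * n + 2)
        have hL : (∑ p ∈ Finset.HasAntidiagonal.antidiagonal (2 * n + 2), u 0 p.1 *
            ∑ q ∈ Finset.HasAntidiagonal.antidiagonal p.2, u 1 q.1 * u 1 q.2) ∈ nilradical B := by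
          refine Ideal.sum_mem _ fun p hp => ?_
          have hp' := Finset.HasAntidiagonal.mem_antidiagonal.mp hp
          rcases Nat.eq_zero_or_pos p.1 with h0 | h0
          · rw [h0, hu0, zero_mul]; exact zero_mem _
          · exact Ideal.mul_mem_left _ _ (hW p.2 (by omega))
        have hmem2 : ((n + 1, n + 1) : ℕ × ℕ) ∈ Finset.HasAntidiagonal.antidiagonal (2 * n + 2) :=
          Finset.HasAntidiagonal.mem_antidiagonal.mpr (by omega)
        have hsplit := Finset.add_sum_erase _
          (fun p : ℕ × ℕ => u 2 p.1 * u 2 p.2) hmem2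
        have herase : (∑ p ∈ (Finset.HasAntidiagonal.antidiagonal (2 * n + 2)).erase (n + 1, n + 1),
            u 2 p.1 * u 2 p.2) ∈ nilradical B := by
          refine Ideal.sum_mem _ fun p hp => ?_
          obtain ⟨hne, hp2⟩ := Finset.mem_erase.mp hp
          have hp' := Finset.HasAntidiagonal.mem_antidiagonal.mp hp2
          have : p.1 ≤ n ∨ p.2 ≤ n := by
            by_contra hc
            push_neg at hc
            exact hne (Prod.ext (by omega) (by omega))
          rcases this with h | h
          · exact Ideal.mul_mem_right _ _ (IH p.1 (by omega)).2
          · exact Ideal.mul_mem_left _ _ (IH p.2 (by omega)).2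
        have hsq : u 2 (n + 1) * u 2 (n + 1) ∈ nilradical B := by
          have heq : u 2 (n + 1) * u 2 (n + 1) =
              (∑ p ∈ Finset.HasAntidiagonal.antidiagonal (2 * n + 2), u 2 p.1 * u 2 p.2) -
              ∑ p ∈ (Finset.HasAntidiagonal.antidiagonal (2 * n + 2)).erase (n + 1, n + 1),
                u 2 p.1 * u 2 p.2 := eq_sub_of_add_eq hsplit
          rw [heq, ← h1]
          exact Ideal.sub_mem _ hL herase
        rw [mem_nilradical] at hsq ⊢
        obtain ⟨N, hN⟩ := hsq
        exact ⟨2 * N, by rw [pow_mul, pow_two]; exact hN⟩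
      have hz' : ∀ d ≤ n + 1, u 2 d ∈ nilradical B := by
        intro d hd
        rcases Nat.lt_or_ge d (n + 1) with h | h
        · exact (IH d h).2
        · have : d = n + 1 := by omega
          rw [this]; exact hz
      -- y-step at level 2n+3
      have hy : u 1 (n + 1) ∈ nilradical B := by
        have h2 := hrel (2 * n + 3)
        have hR : (∑ p ∈ Finset.HasAntidiagonal.antidiagonal (2 * n + 3), u 2 p.1 * u 2 p.2)
            ∈ nilradical B := by
          refine Ideal.sum_mem _ fun p hp => ?_
          have hp' := Finset.HasAntidiagonal.mem_antidiagonal.mp hp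
          rcases le_or_gt p.1 (n + 1) with h | h
          · exact Ideal.mul_mem_right _ _ (hz' p.1 h)
          · exact Ideal.mul_mem_left _ _ (hz' p.2 (by omega))
        have hmem1 : ((1, 2 * n + 2) : ℕ × ℕ) ∈ Finset.HasAntidiagonal.antidiagonal (2 * n + 3) :=
          Finset.HasAntidiagonal.mem_antidiagonal.mpr (by omega)
        have hsplit1 := Finset.add_sum_erase _
          (fun p : ℕ × ℕ => u 0 p.1 * ∑ q ∈ Finset.HasAntidiagonal.antidiagonal p.2, u 1 q.1 * u 1 q.2) hmem1
        have herase1 : (∑ p ∈ (Finset.HasAntidiagonal.antidiagonal (2 * n + 3)).erase (1, 2 * n + 2),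
            u 0 p.1 * ∑ q ∈ Finset.HasAntidiagonal.antidiagonal p.2, u 1 q.1 * u 1 q.2) ∈ nilradical B := by
          refine Ideal.sum_mem _ fun p hp => ?_
          obtain ⟨hne, hp2⟩ := Finset.mem_erase.mp hp
          have hp' := Finset.HasAntidiagonal.mem_antidiagonal.mp hp2
          rcases Nat.eq_zero_or_pos p.1 with h0 | h0
          · rw [h0, hu0, zero_mul]; exact zero_mem _
          · have hp1ne : p.1 ≠ 1 := by
              intro h1'
              exact hne (Prod.ext h1' (by omega))
            exact Ideal.mul_mem_left _ _ (hW p.2 (by omega))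
        have hterm : u 0 1 *
            (∑ q ∈ Finset.HasAntidiagonal.antidiagonal (2 * n + 2), u 1 q.1 * u 1 q.2) ∈ nilradical B := by
          have heq : u 0 1 * (∑ q ∈ Finset.HasAntidiagonal.antidiagonal (2 * n + 2), u 1 q.1 * u 1 q.2) =
              (∑ p ∈ Finset.HasAntidiagonal.antidiagonal (2 * n + 3), u 0 p.1 *
                ∑ q ∈ Finset.HasAntidiagonal.antidiagonal p.2, u 1 q.1 * u 1 q.2) -
              ∑ p ∈ (Finset.HasAntidiagonal.antidiagonal (2 * n + 3)).erase (1, 2 * n + 2),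
                u 0 p.1 * ∑ q ∈ Finset.HasAntidiagonal.antidiagonal p.2, u 1 q.1 * u 1 q.2 :=
            eq_sub_of_add_eq hsplit1
          rw [heq, h2]
          exact Ideal.sub_mem _ hR herase1
        have hmem2 : ((n + 1, n + 1) : ℕ × ℕ) ∈ Finset.HasAntidiagonal.antidiagonal (2 * n + 2) :=
          Finset.HasAntidiagonal.mem_antidiagonal.mpr (by omega)
        have hsplit2 := Finset.add_sum_erase _
          (fun q : ℕ × ℕ => u 1 q.1 * u 1 q.2) hmem2
        have herase2 : (∑ q ∈ (Finset.HasAntidiagonal.antidiagonal (2 * n + 2)).erase (n + 1, n + 1),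
            u 1 q.1 * u 1 q.2) ∈ nilradical B := by
          refine Ideal.sum_mem _ fun q hq => ?_
          obtain ⟨hne, hq2⟩ := Finset.mem_erase.mp hq
          have hq' := Finset.HasAntidiagonal.mem_antidiagonal.mp hq2
          have : q.1 ≤ n ∨ q.2 ≤ n := by
            by_contra hc
            push_neg at hc
            exact hne (Prod.ext (by omega) (by omega))
          rcases this with h | h
          · exact Ideal.mul_mem_right _ _ (IH q.1 (by omega)).1
          · exact Ideal.mul_mem_left _ _ (IH q.2 (by omega)).1
        have hterm2 : u 0 1 * (u 1 (n + 1) * u 1 (n + 1)) ∈ nilradical B := by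
          have heq : u 1 (n + 1) * u 1 (n + 1) =
              (∑ q ∈ Finset.HasAntidiagonal.antidiagonal (2 * n + 2), u 1 q.1 * u 1 q.2) -
              ∑ q ∈ (Finset.HasAntidiagonal.antidiagonal (2 * n + 2)).erase (n + 1, n + 1),
                u 1 q.1 * u 1 q.2 := eq_sub_of_add_eq hsplit2
          rw [heq, mul_sub]
          exact Ideal.sub_mem _ hterm (Ideal.mul_mem_left _ _ herase2)
        obtain ⟨v, hv⟩ := hunit.exists_left_inv
        have hsq : u 1 (n + 1) * u 1 (n + 1) ∈ nilradical B := by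
          have heq : u 1 (n + 1) * u 1 (n + 1) =
              v * (u 0 1 * (u 1 (n + 1) * u 1 (n + 1))) := by
            rw [← mul_assoc, hv, one_mul]
          rw [heq]
          exact Ideal.mul_mem_left _ _ hterm2
        rw [mem_nilradical] at hsq ⊢
        obtain ⟨N, hN⟩ := hsq
        exact ⟨2 * N, by rw [pow_mul, pow_two]; exact hN⟩
      exact ⟨hy, hz⟩


set_option synthInstance.maxHeartbeats 1000000 in
set_option maxHeartbeats 1600000 in
lemma wKey {k : Type*} [Field k] (f : MvPolynomial (Fin 3) k)
    (hf : f = X 0 * X 1 ^ 2 - X 2 ^ 2) (K : Ideal (MvPolynomial (Fin 3 × ℕ) k))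
    (hK : K = Ideal.span {g | ∃ j : Fin 3, g = X (j, (0 : ℕ))} ⊔ arcIdeal (Ideal.span {f}))
    (j : Fin 3) (hj : j = 1 ∨ j = 2) (i : ℕ) :
    ∃ m N : ℕ, X ((0 : Fin 3), 1) ^ m * X (j, i) ^ N ∈ K := by
  classical
  set x₁ : MvPolynomial (Fin 3 × ℕ) k ⧸ K := Ideal.Quotient.mk K (X ((0 : Fin 3), 1)) with hx₁
  set B := Localization.Away x₁ with hB
  set ψ : MvPolynomial (Fin 3 × ℕ) k →+* B :=
    (algebraMap (MvPolynomial (Fin 3 × ℕ) k ⧸ K) B).comp (Ideal.Quotient.mk K) with hψ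
  have hu0 : ∀ j' : Fin 3, ψ (X (j', (0 : ℕ))) = 0 := by
    intro j'
    have : X (j', (0 : ℕ)) ∈ K := by
      rw [hK]
      exact Ideal.mem_sup_left (Ideal.subset_span ⟨j', rfl⟩)
    simp [hψ, Ideal.Quotient.eq_zero_iff_mem.mpr this]
  have hunit : IsUnit (ψ (X ((0 : Fin 3), 1))) :=
    IsLocalization.Away.algebraMap_isUnit (S := B) x₁
  have hrel : ∀ m : ℕ,
      (∑ p ∈ Finset.HasAntidiagonal.antidiagonal m, ψ (X ((0 : Fin 3), p.1)) *
        ∑ q ∈ Finset.HasAntidiagonal.antidiagonal p.2, ψ (X ((1 : Fin 3), q.1)) * ψ (X ((1 : Fin 3), q.2))) =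
      ∑ p ∈ Finset.HasAntidiagonal.antidiagonal m, ψ (X ((2 : Fin 3), p.1)) * ψ (X ((2 : Fin 3), p.2)) := by
    intro m
    have hmem : (PowerSeries.coeff m (univArc k 3 f)) ∈ K := by
      rw [hK]
      exact Ideal.mem_sup_right (Ideal.subset_span ⟨f, Ideal.mem_span_singleton_self f, m, rfl⟩)
    have hm : ψ (PowerSeries.coeff m (univArc k 3 f)) = 0 := by
      simp [hψ, Ideal.Quotient.eq_zero_iff_mem.mpr hmem]
    rw [wUnivArc_eq f hf, map_sub, PowerSeries.coeff_mul, PowerSeries.coeff_mul, map_sub,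
      map_sum, map_sum] at hm
    simp only [PowerSeries.coeff_mul, PowerSeries.coeff_mk, map_mul, map_sum] at hm
    exact sub_eq_zero.mp hm
  have main := wNilAux (fun j' i' => ψ (X (j', i'))) hu0 hunit hrel
  have hnil : ψ (X (j, i)) ∈ nilradical B := by
    rcases hj with rfl | rfl
    · exact (main i).1
    · exact (main i).2
  rw [mem_nilradical] at hnil
  obtain ⟨N, hN⟩ := hnil
  have hN' : algebraMap _ B (Ideal.Quotient.mk K (X (j, i) ^ N)) = 0 := by
    rw [map_pow, map_pow]
    exact hN
  obtain ⟨⟨w, e, he⟩, hwe⟩ :=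
    (IsLocalization.map_eq_zero_iff (Submonoid.powers x₁) B _).mp hN'
  refine ⟨e, N, ?_⟩
  rw [← Ideal.Quotient.eq_zero_iff_mem, map_mul, map_pow]
  simpa [← he] using hwe

end WhitneyAux

set_option maxHeartbeats 2000000 in
set_option synthInstance.maxHeartbeats 1000000 in
/-- **A thin irreducible component for the Whitney umbrella.**  Let `k` be algebraically
closed of characteristic zero and `f = x·y² − z² ∈ k[x,y,z]`.  In the arc-fiber algebra `A`
at the origin (the quotient of `A∞((f))` by the ideal generated by the images of
`x⁽⁰⁾, y⁽⁰⁾, z⁽⁰⁾`), the ideal generated by the images of all variables `y⁽ⁱ⁾` and `z⁽ⁱ⁾` is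
a minimal prime: the set of arcs lying in the singular axis `y = z = 0` through the origin
is an irreducible component of the set of arcs on the Whitney umbrella through the origin. -/
theorem whitney_umbrella_thin_component (k : Type*) [Field k] [IsAlgClosed k] [CharZero k]
    (f : MvPolynomial (Fin 3) k)
    (hf : f = MvPolynomial.X 0 * MvPolynomial.X 1 ^ 2 - MvPolynomial.X 2 ^ 2)
    (O : Ideal (ArcAlgebra (Ideal.span {f})))
    (hO : O = Ideal.span {a | ∃ j : Fin 3,
      a = Ideal.Quotient.mk (arcIdeal (Ideal.span {f})) (MvPolynomial.X (j, (0 : ℕ)))}) :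
    Ideal.span {a : ArcAlgebra (Ideal.span {f}) ⧸ O | ∃ i : ℕ,
        a = Ideal.Quotient.mk O (Ideal.Quotient.mk (arcIdeal (Ideal.span {f}))
              (MvPolynomial.X ((1 : Fin 3), i))) ∨
        a = Ideal.Quotient.mk O (Ideal.Quotient.mk (arcIdeal (Ideal.span {f}))
              (MvPolynomial.X ((2 : Fin 3), i)))} ∈
      minimalPrimes (ArcAlgebra (Ideal.span {f}) ⧸ O) := by
  classical
  set π : MvPolynomial (Fin 3 × ℕ) k →+* (ArcAlgebra (Ideal.span {f}) ⧸ O) :=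
    (Ideal.Quotient.mk O).comp (Ideal.Quotient.mk (arcIdeal (Ideal.span {f}))) with hπ
  have hπapp : ∀ g : MvPolynomial (Fin 3 × ℕ) k,
      π g = Ideal.Quotient.mk O (Ideal.Quotient.mk (arcIdeal (Ideal.span {f})) g) := by
    intro g
    rw [hπ, RingHom.comp_apply]
  have hπsurj : Function.Surjective π := by
    rw [hπ, RingHom.coe_comp]
    exact Function.Surjective.comp Ideal.Quotient.mk_surjective Ideal.Quotient.mk_surjective
  set K : Ideal (MvPolynomial (Fin 3 × ℕ) k) :=
    Ideal.span {g | ∃ j : Fin 3, g = X (j, (0 : ℕ))} ⊔ arcIdeal (Ideal.span {f}) with hK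
  -- kernel of π is K
  have hkerπ : RingHom.ker π = K := by
    have h1 : RingHom.ker π = Ideal.comap (Ideal.Quotient.mk (arcIdeal (Ideal.span {f}))) O := by
      ext x
      rw [RingHom.mem_ker, hπ, RingHom.comp_apply, Ideal.Quotient.eq_zero_iff_mem,
        Ideal.mem_comap]
    have hO' : O = Ideal.map (Ideal.Quotient.mk (arcIdeal (Ideal.span {f})))
        (Ideal.span {g | ∃ j : Fin 3, g = X (j, (0 : ℕ))}) := by
      rw [hO, Ideal.map_span]
      congr 1
      ext a
      constructor
      · rintro ⟨j, rfl⟩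
        exact ⟨X (j, (0 : ℕ)), ⟨j, rfl⟩, rfl⟩
      · rintro ⟨g, ⟨j, rfl⟩, rfl⟩
        exact ⟨j, rfl⟩
    rw [h1, hO', Ideal.comap_map_of_surjective _ Ideal.Quotient.mk_surjective, hK]
    congr 1
    exact Ideal.mk_ker
  -- the big prime
  set Qt : Ideal (MvPolynomial (Fin 3 × ℕ) k) := Ideal.span (X '' wT) with hQt
  have hKQ : K ≤ Qt := by
    rw [hK]
    refine sup_le ?_ ?_
    · rw [Ideal.span_le]
      rintro _ ⟨j, rfl⟩
      exact Ideal.subset_span ⟨(j, (0 : ℕ)), Or.inl rfl, rfl⟩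
    · refine le_trans (wArcIdeal_le f hf) (Ideal.span_mono (Set.image_mono ?_))
      intro p hp
      exact Or.inr hp
  haveI hQtprime : Qt.IsPrime := wSpan_isPrime
  -- image of Qt is the span in question
  have hmapQ : Ideal.map π Qt =
      Ideal.span {a : ArcAlgebra (Ideal.span {f}) ⧸ O | ∃ i : ℕ,
        a = Ideal.Quotient.mk O (Ideal.Quotient.mk (arcIdeal (Ideal.span {f}))
              (MvPolynomial.X ((1 : Fin 3), i))) ∨
        a = Ideal.Quotient.mk O (Ideal.Quotient.mk (arcIdeal (Ideal.span {f}))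
              (MvPolynomial.X ((2 : Fin 3), i)))} := by
    rw [hQt, Ideal.map_span]
    apply le_antisymm <;> rw [Ideal.span_le]
    · rintro _ ⟨_, ⟨t, ht, rfl⟩, rfl⟩
      rcases ht with h0 | h1 | h2
      · have htK : X t ∈ K := by
          rw [hK]
          exact Ideal.mem_sup_left
            (Ideal.subset_span ⟨t.1, congrArg X (Prod.ext rfl h0)⟩)
        have : π (X t) = 0 := by
          have h := htK; rw [← hkerπ] at h; exact RingHom.mem_ker.mp h
        rw [this]
        exact zero_mem _
      · refine Ideal.subset_span ⟨t.2, Or.inl ?_⟩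
        rw [show t = ((1 : Fin 3), t.2) from Prod.ext h1 rfl, hπapp]
      · refine Ideal.subset_span ⟨t.2, Or.inr ?_⟩
        rw [show t = ((2 : Fin 3), t.2) from Prod.ext h2 rfl, hπapp]
    · rintro a ⟨i, h | h⟩ <;> rw [h]
      · exact Ideal.subset_span
          ⟨X ((1 : Fin 3), i), ⟨((1 : Fin 3), i), Or.inr (Or.inl rfl), rfl⟩, hπapp _⟩
      · exact Ideal.subset_span
          ⟨X ((2 : Fin 3), i), ⟨((2 : Fin 3), i), Or.inr (Or.inr rfl), rfl⟩, hπapp _⟩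
  rw [← hmapQ]
  -- now prove map π Qt is a minimal prime
  have hprime : (Ideal.map π Qt).IsPrime :=
    Ideal.map_isPrime_of_surjective hπsurj (by rw [hkerπ]; exact hKQ)
  simp only [minimalPrimes, Ideal.minimalPrimes, Set.mem_setOf_eq]
  refine ⟨⟨hprime, bot_le⟩, ?_⟩
  rintro p ⟨hp, -⟩ hle
  have hcomapQ : Ideal.comap π (Ideal.map π Qt) = Qt := by
    rw [Ideal.comap_map_of_surjective _ hπsurj]
    refine sup_eq_left.mpr ?_
    rw [show Ideal.comap π ⊥ = RingHom.ker π from rfl, hkerπ]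
    exact hKQ
  have hple : Ideal.comap π p ≤ Qt := by
    rw [← hcomapQ]
    exact Ideal.comap_mono hle
  haveI hpprime : (Ideal.comap π p).IsPrime := Ideal.IsPrime.comap π
  have hKp : K ≤ Ideal.comap π p := by
    rw [← hkerπ]
    exact Ideal.comap_mono bot_le
  rw [Ideal.map_le_iff_le_comap, hQt, Ideal.span_le]
  rintro _ ⟨t, ht, rfl⟩
  rcases ht with h0 | h1 | h2
  · exact hKp (by
      rw [hK]
      exact Ideal.mem_sup_left (Ideal.subset_span ⟨t.1, congrArg X (Prod.ext rfl h0)⟩))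
  · obtain ⟨m, N, hmN⟩ := wKey f hf K hK t.1 (Or.inl h1) t.2
    have hinP : X ((0 : Fin 3), 1) ^ m * X (t.1, t.2) ^ N ∈ Ideal.comap π p := hKp hmN
    rcases hpprime.mem_or_mem hinP with hc | hc
    · exact absurd (hple (hpprime.mem_of_pow_mem m hc)) wX01_not_mem
    · exact hpprime.mem_of_pow_mem N hc
  · obtain ⟨m, N, hmN⟩ := wKey f hf K hK t.1 (Or.inr h2) t.2
    have hinP : X ((0 : Fin 3), 1) ^ m * X (t.1, t.2) ^ N ∈ Ideal.comap π p := hKp hmN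
    rcases hpprime.mem_or_mem hinP with hc | hc
    · exact absurd (hple (hpprime.mem_of_pow_mem m hc)) wX01_not_mem
    · exact hpprime.mem_of_pow_mem N hc
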